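/- arXiv:1211.5675 — 5 statements merged into one kernel-verified Lean document; each statement's English description precedes it below -/
import Mathlib

section
/- Let α ≥ 0, p ≥ 0, t > 0, θ ∈ ℝ, x, u ∈ ℝ and y, v, w ∈ ℂ. If the two 3×3 complex matrices [[α, 0, −αe^{iθ}], [0, x, y], [−αe^{−iθ}, ȳ, α]] and [[p, v, −tp e^{−iθ}], [v̄, u, w], [−tp e^{iθ}, w̄, t²p]] are both positive semidefinite, then y = 0 and w = −v̄ t e^{−iθ}. -/
open Complex Matrix ComplexOrder

lemma aux_quad (x : ℝ) (c : ℂ)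
    (h : ∀ s : ℂ, 0 ≤ (x : ℂ) * (star s * s) + star s * c + star c * s) :
    c = 0 := by
  by_contra hc
  have hn : 0 < Complex.normSq c := by
    simpa [Complex.normSq_pos] using hc
  set ε : ℝ := 1 / (|x| + 1) with hε
  have hεpos : 0 < ε := by positivity
  have h' := h (-(ε : ℂ) * c)
  have hcc : star c * c = (Complex.normSq c : ℂ) := by
    rw [Complex.star_def, Complex.normSq_eq_conj_mul_self]
  have hcalc : (x : ℂ) * (star (-(ε : ℂ) * c) * (-(ε : ℂ) * c))
      + star (-(ε : ℂ) * c) * c + star c * (-(ε : ℂ) * c)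
      = (((x * ε ^ 2 - 2 * ε) * Complex.normSq c : ℝ) : ℂ) := by
    push_cast
    simp only [star_mul', star_neg, RCLike.star_def, Complex.conj_ofReal]
    rw [← hcc]
    push_cast [Complex.star_def]
    ring
  rw [hcalc] at h'
  have h0 : (0 : ℝ) ≤ (x * ε ^ 2 - 2 * ε) * Complex.normSq c := by
    exact_mod_cast h'
  have hinv : (|x| + 1) * (|x| + 1)⁻¹ = 1 := mul_inv_cancel₀ (by positivity)
  have hipos : 0 < (|x| + 1)⁻¹ := by positivity
  have hxε : x * ε < 1 := by
    have h2 : |x| * (|x| + 1)⁻¹ < 1 := by nlinarith [abs_nonneg x]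
    have hεi : ε = (|x| + 1)⁻¹ := by rw [hε, one_div]
    rw [hεi]
    calc x * (|x| + 1)⁻¹ ≤ |x| * (|x| + 1)⁻¹ :=
          mul_le_mul_of_nonneg_right (le_abs_self x) hipos.le
      _ < 1 := h2
  nlinarith [mul_lt_mul_of_pos_right hxε hεpos, mul_pos hεpos hn, h0, hn]

/-- Lemma 1 of the paper: positivity of the two displayed `3×3` matrices forces
`y = 0` and `w = -v̄ t e^{-iθ}`. -/
theorem lemma_pos_entries (α p t θ x u : ℝ) (y v w : ℂ)
    (hα : 0 ≤ α) (hp : 0 ≤ p) (ht : 0 < t)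
    (h1 : (!![(α : ℂ), 0, -(α : ℂ) * exp (θ * I);
              0, (x : ℂ), y;
              -(α : ℂ) * exp (-θ * I), star y, (α : ℂ)]).PosSemidef)
    (h2 : (!![(p : ℂ), v, -((t : ℂ) * p) * exp (-θ * I);
              star v, (u : ℂ), w;
              -((t : ℂ) * p) * exp (θ * I), star w, ((t : ℂ) ^ 2 * p)]).PosSemidef) :
    y = 0 ∧ w = -(star v) * t * exp (-θ * I) := by
  have hkey : exp (θ * I) * exp (-(θ * I)) = 1 := by
    rw [← Complex.exp_add]
    simp
  have hy : y = 0 := by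
    apply aux_quad x
    intro s
    have h := h1.dotProduct_mulVec_nonneg ![exp (θ * I), s, 1]
    have heq : star ![exp (θ * I), s, (1 : ℂ)] ⬝ᵥ
        ((!![(α : ℂ), 0, -(α : ℂ) * exp (θ * I);
              0, (x : ℂ), y;
              -(α : ℂ) * exp (-θ * I), star y, (α : ℂ)]) *ᵥ ![exp (θ * I), s, 1])
        = (x : ℂ) * (star s * s) + star s * y + star y * s := by
      simp [Matrix.mulVec, dotProduct, Fin.sum_univ_three, Complex.star_def,
        ← Complex.exp_conj, _root_.map_mul, map_neg, Complex.conj_ofReal, neg_mul]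
      linear_combination (-(α : ℂ)) * hkey
    rwa [heq] at h
  refine ⟨hy, ?_⟩
  have hc : (star v) * t + w * exp (θ * I) = 0 := by
    apply aux_quad u
    intro s
    have h := h2.dotProduct_mulVec_nonneg ![(t : ℂ), s, exp (θ * I)]
    have heq : star ![(t : ℂ), s, exp (θ * I)] ⬝ᵥ
        ((!![(p : ℂ), v, -((t : ℂ) * p) * exp (-θ * I);
              star v, (u : ℂ), w;
              -((t : ℂ) * p) * exp (θ * I), star w, ((t : ℂ) ^ 2 * p)]) *ᵥ
          ![(t : ℂ), s, exp (θ * I)])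
        = (u : ℂ) * (star s * s) + star s * ((star v) * t + w * exp (θ * I))
          + star ((star v) * t + w * exp (θ * I)) * s := by
      simp [Matrix.mulVec, dotProduct, Fin.sum_univ_three, Complex.star_def,
        ← Complex.exp_conj, _root_.map_mul, map_neg, Complex.conj_ofReal, neg_mul]
      linear_combination (-(t : ℂ) ^ 2 * p) * hkey
    rwa [heq] at h
  rw [show (-(θ : ℂ) * I) = -((θ : ℂ) * I) from neg_mul _ _]
  linear_combination exp (-((θ : ℂ) * I)) * hc - w * hkey
end

section
/- Let α, α′ ≥ 0, t > 0 and θ ∈ ℝ. Let M ∈ M₄(ℂ) (viewed as M₂(ℂ)⊗M₂(ℂ)) be the Hermitian matrix with diagonal (α, α′, t²α′, α), with (1,4)-entry −(α + α′t)e^{iθ} and (4,1)-entry −(α + α′t)e^{−iθ}, and all other entries zero. Suppose M = P + Q where P is positive semidefinite and the partial transpose Q^Γ is positive semidefinite. Then necessarily P is the matrix with diagonal (α, 0, 0, α), (1,4)-entry −αe^{iθ} and (4,1)-entry −αe^{−iθ} and zeros elsewhere, and Q is the matrix with diagonal (0, α′, t²α′, 0), (1,4)-entry −α′t e^{iθ}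 and (4,1)-entry −α′t e^{−iθ} and zeros elsewhere. -/
open Complex Matrix ComplexOrder

/-- Partial transpose (transpose in the first tensor factor) of a `4×4` matrix viewed as an
element of `M₂(ℂ) ⊗ M₂(ℂ)` in `2×2` block form. -/
def partialTranspose2 (Q : Matrix (Fin 4) (Fin 4) ℂ) : Matrix (Fin 4) (Fin 4) ℂ :=
  !![Q 0 0, Q 0 1, Q 2 0, Q 2 1;
     Q 1 0, Q 1 1, Q 3 0, Q 3 1;
     Q 0 2, Q 0 3, Q 2 2, Q 2 3;
     Q 1 2, Q 1 3, Q 3 2, Q 3 3]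

private lemma squeeze1 (z x y : ℝ) (_hz : 0 ≤ z) (hx0 : 0 ≤ x) (hy0 : 0 ≤ y)
    (hx : x ≤ z) (hy : y ≤ z) (h : z ^ 2 ≤ x * y) : x = z ∧ y = z :=
  ⟨by nlinarith, by nlinarith⟩

private lemma squeeze2 (t a b c : ℝ) (ht : 0 < t) (ha : 0 ≤ a) (hb : 0 ≤ b) (hc : 0 ≤ c)
    (hb' : b ≤ a) (hc' : c ≤ t ^ 2 * a) (h : (a * t) ^ 2 ≤ c * b) :
    b = a ∧ c = t ^ 2 * a := by
  have h4 : 0 < t ^ 2 := by positivity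
  constructor
  · have h1 : c * b ≤ (t ^ 2 * a) * b := mul_le_mul_of_nonneg_right hc' hb
    have h2 : t ^ 2 * (a * (a - b)) ≤ t ^ 2 * 0 := by nlinarith
    have h3 : a * (a - b) ≤ 0 := (mul_le_mul_iff_right₀ h4).mp h2
    have h5 : a * (a - b) = 0 := le_antisymm h3 (mul_nonneg ha (by linarith))
    rcases mul_eq_zero.mp h5 with h6 | h6
    · simp [h6] at hb' ⊢; linarith
    · linarith
  · have h1 : c * b ≤ c * a := mul_le_mul_of_nonneg_left hb' hc
    have h2 : a * (t ^ 2 * a - c) ≤ 0 := by nlinarith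
    have h5 : a * (t ^ 2 * a - c) = 0 := le_antisymm h2 (mul_nonneg ha (by linarith))
    rcases mul_eq_zero.mp h5 with h6 | h6
    · rw [h6] at hc' ⊢; simp at hc' ⊢; linarith
    · linarith

open ComplexConjugate in
private lemma psd_diag {n} [Fintype n] [DecidableEq n] {M : Matrix n n ℂ}
    (h : M.PosSemidef) (i : n) : 0 ≤ (M i i).re ∧ (M i i).im = 0 := by
  have h2 := h.dotProduct_mulVec_nonneg (Pi.single i 1)
  simp only [← Pi.single_star, star_one, single_dotProduct, mulVec_single, mul_one, one_mul] at h2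
  rw [Complex.le_def] at h2
  exact ⟨by simpa using h2.1, by simpa using h2.2.symm⟩

open ComplexConjugate in
private lemma psd_entry_sq {n} [Fintype n] [DecidableEq n] {M : Matrix n n ℂ}
    (h : M.PosSemidef) (i j : n) (_hij : i ≠ j) :
    Complex.normSq (M i j) ≤ (M i i).re * (M j j).re := by
  have hji : M j i = conj (M i j) := by
    have := congrFun (congrFun h.1 j) i
    simp only [conjTranspose_apply] at this
    rw [← this]; rfl
  have hm : conj (M i j) * M i j = (Complex.normSq (M i j) : ℂ) := by
    rw [mul_comm, Complex.mul_conj]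
  have key : ∀ r : ℝ, 0 ≤ Complex.normSq (M i j) * (M i i).re * (r * r)
      + 2 * Complex.normSq (M i j) * r + (M j j).re := by
    intro r
    set c : ℂ := (r : ℂ) * M i j with hc
    have h2 := h.dotProduct_mulVec_nonneg (Pi.single i c + Pi.single j 1)
    have e : star (Pi.single i c + Pi.single j 1) ⬝ᵥ M *ᵥ (Pi.single i c + Pi.single j 1) =
        conj c * c * M i i + conj c * M i j + c * M j i + M j j := by
      simp only [mulVec_add, star_add, ← Pi.single_star, add_dotProduct, single_dotProduct,
        mulVec_single, Pi.add_apply, star_one, Complex.star_def, Pi.smul_apply, op_smul_eq_mul,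
        col_apply]
      ring
    have e2 : conj c * c * M i i + conj c * M i j + c * M j i + M j j =
        ((Complex.normSq (M i j) * (r * r) : ℝ) : ℂ) * M i i
          + ((2 * Complex.normSq (M i j) * r : ℝ) : ℂ) + M j j := by
      rw [hji, hc]
      push_cast
      simp only [_root_.map_mul, Complex.conj_ofReal]
      linear_combination ((r:ℂ) * r * M i i + 2 * r) * hm
    rw [e, e2, Complex.le_def] at h2
    have h2re : (0:ℝ) ≤ Complex.normSq (M i j) * (r * r) * (M i i).re
        + 2 * Complex.normSq (M i j) * r + (M j j).re := by
      simpa [Complex.add_re, Complex.re_ofReal_mul] using h2.1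
    calc (0:ℝ) ≤ Complex.normSq (M i j) * (r * r) * (M i i).re
        + 2 * Complex.normSq (M i j) * r + (M j j).re := h2re
      _ = Complex.normSq (M i j) * (M i i).re * (r * r)
        + 2 * Complex.normSq (M i j) * r + (M j j).re := by ring
  have hd := discrim_le_zero key
  rw [discrim] at hd
  rcases eq_or_lt_of_le (Complex.normSq_nonneg (M i j)) with h0 | h0
  · rw [← h0]
    exact mul_nonneg (psd_diag h i).1 (psd_diag h j).1
  · nlinarith [hd]

open ComplexConjugate in
private lemma triangle_eq (a s : ℝ) (ha : 0 ≤ a) (hs : 0 ≤ s) (u X Y : ℂ)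
    (hu : ‖u‖ = 1) (hX : ‖X‖ ≤ a) (hY : ‖Y‖ ≤ s)
    (hXY : X + Y = -((a : ℂ) + s) * u) : X = -(a : ℂ) * u ∧ Y = -(s : ℂ) * u := by
  have habs : ‖X + Y‖ = a + s := by
    rw [hXY, show -((a : ℂ) + s) = ((-(a + s) : ℝ) : ℂ) by push_cast; ring]
    rw [norm_mul, hu, Complex.norm_real, Real.norm_eq_abs, mul_one, abs_of_nonpos (by linarith)]
    ring
  have htri := norm_add_le X Y
  have hXa : ‖X‖ = a := by linarith [habs, htri]
  have hYs : ‖Y‖ = s := by linarith [habs, htri]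
  have huc : u * conj u = 1 := by
    rw [Complex.mul_conj, ← Complex.sq_norm, hu]; norm_num
  have hsum : (X * conj u).re + (Y * conj u).re = -(a + s) := by
    have he : (X + Y) * conj u = ((-(a + s) : ℝ) : ℂ) := by
      rw [hXY, show -((a : ℂ) + s) = ((-(a + s) : ℝ) : ℂ) by push_cast; ring, mul_assoc, huc,
        mul_one]
    have := congrArg Complex.re he
    simpa [add_mul] using this
  have hXre : -a ≤ (X * conj u).re := by
    have h1 := (abs_le.1 (Complex.abs_re_le_norm (X * conj u))).1
    rw [norm_mul, hXa, Complex.norm_conj, hu, mul_one] at h1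
    exact h1
  have hYre : -s ≤ (Y * conj u).re := by
    have h1 := (abs_le.1 (Complex.abs_re_le_norm (Y * conj u))).1
    rw [norm_mul, hYs, Complex.norm_conj, hu, mul_one] at h1
    exact h1
  have hXre' : (X * conj u).re = -a := by linarith
  have hXeq : X = -(a : ℂ) * u := by
    have hz : Complex.normSq (X + (a : ℂ) * u) = 0 := by
      rw [Complex.normSq_add]
      have e1 : Complex.normSq X = a ^ 2 := by rw [Complex.normSq_eq_norm_sq, hXa]
      have e2 : Complex.normSq ((a : ℂ) * u) = a ^ 2 := by
        rw [Complex.normSq_eq_norm_sq, norm_mul, Complex.norm_real, Real.norm_eq_abs, hu, mul_one,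
          _root_.abs_of_nonneg ha]
      have e3 : (X * conj ((a : ℂ) * u)).re = -(a * a) := by
        rw [_root_.map_mul, Complex.conj_ofReal, show X * ((a:ℂ) * conj u) = (a:ℂ) * (X * conj u)
          by ring, Complex.re_ofReal_mul, hXre']
        ring
      rw [e1, e2, e3]
      ring
    have := Complex.normSq_eq_zero.mp hz
    linear_combination this
  refine ⟨hXeq, ?_⟩
  linear_combination hXY - hXeq

set_option maxHeartbeats 1000000 in
open ComplexConjugate in
/-- The decomposition of the displayed `4×4` matrix as a sum of a positive semidefinite matrix
and a matrix with positive semidefinite partial transpose is unique. -/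
theorem unique_decomposition (α α' t θ : ℝ) (hα : 0 ≤ α) (hα' : 0 ≤ α') (ht : 0 < t)
    (P Q : Matrix (Fin 4) (Fin 4) ℂ)
    (hM : P + Q =
      !![(α : ℂ), 0, 0, -((α : ℂ) + (α' : ℂ) * t) * exp (θ * I);
         0, (α' : ℂ), 0, 0;
         0, 0, (t : ℂ) ^ 2 * (α' : ℂ), 0;
         -((α : ℂ) + (α' : ℂ) * t) * exp (-θ * I), 0, 0, (α : ℂ)])
    (hP : P.PosSemidef) (hQ : (partialTranspose2 Q).PosSemidef) :
    P = !![(α : ℂ), 0, 0, -(α : ℂ) * exp (θ * I);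
           0, 0, 0, 0;
           0, 0, 0, 0;
           -(α : ℂ) * exp (-θ * I), 0, 0, (α : ℂ)] ∧
    Q = !![0, 0, 0, -(α' : ℂ) * t * exp (θ * I);
           0, (α' : ℂ), 0, 0;
           0, 0, (t : ℂ) ^ 2 * (α' : ℂ), 0;
           -(α' : ℂ) * t * exp (-θ * I), 0, 0, 0] := by
  set u : ℂ := exp (θ * I) with hudef
  have hu : ‖u‖ = 1 := by simp [hudef, Complex.norm_exp]
  -- entry equations
  have h00 : P 0 0 + Q 0 0 = (α : ℂ) := by
    have := Matrix.ext_iff.mpr hM 0 0; simpa using this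
  have h11 : P 1 1 + Q 1 1 = (α' : ℂ) := by
    have := Matrix.ext_iff.mpr hM 1 1; simpa using this
  have h22 : P 2 2 + Q 2 2 = (t : ℂ) ^ 2 * α' := by
    have := Matrix.ext_iff.mpr hM 2 2; simpa using this
  have h33 : P 3 3 + Q 3 3 = (α : ℂ) := by
    have := Matrix.ext_iff.mpr hM 3 3; simpa using this
  have h03 : P 0 3 + Q 0 3 = -((α : ℂ) + (α' : ℂ) * t) * u := by
    have := Matrix.ext_iff.mpr hM 0 3; simpa using this
  -- partial transpose entries
  have hG21 : partialTranspose2 Q 2 1 = Q 0 3 := by simp [partialTranspose2]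
  have hG11 : partialTranspose2 Q 1 1 = Q 1 1 := by simp [partialTranspose2]
  have hG22 : partialTranspose2 Q 2 2 = Q 2 2 := by simp [partialTranspose2]
  have hG00 : partialTranspose2 Q 0 0 = Q 0 0 := by simp [partialTranspose2]
  have hG33 : partialTranspose2 Q 3 3 = Q 3 3 := by simp [partialTranspose2]
  -- diagonal nonnegativity
  have hP0 := psd_diag hP 0
  have hP1 := psd_diag hP 1
  have hP2 := psd_diag hP 2
  have hP3 := psd_diag hP 3
  have hQ0 := psd_diag hQ 0; rw [hG00] at hQ0
  have hQ1 := psd_diag hQ 1; rw [hG11] at hQ1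
  have hQ2 := psd_diag hQ 2; rw [hG22] at hQ2
  have hQ3 := psd_diag hQ 3; rw [hG33] at hQ3
  -- real-part equations
  have hre00 : (P 0 0).re + (Q 0 0).re = α := by
    have := congrArg Complex.re h00; simpa using this
  have hre11 : (P 1 1).re + (Q 1 1).re = α' := by
    have := congrArg Complex.re h11; simpa using this
  have hre22 : (P 2 2).re + (Q 2 2).re = t ^ 2 * α' := by
    have := congrArg Complex.re h22
    simpa [Complex.mul_re, ← Complex.ofReal_pow] using this
  have hre33 : (P 3 3).re + (Q 3 3).re = α := by
    have := congrArg Complex.re h33; simpa using this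
  -- off-diagonal bounds
  have hb1 := psd_entry_sq hP 0 3 (by decide)
  have hb2 := psd_entry_sq hQ 2 1 (by decide)
  rw [hG21, hG22, hG11] at hb2
  have hPabs : ‖P 0 3‖ ≤ α := by
    nlinarith [Complex.sq_norm (P 0 3), norm_nonneg (P 0 3), hP0.1, hP3.1, hQ0.1, hQ3.1]
  have hq1le : (Q 1 1).re ≤ α' := by linarith [hP1.1]
  have hq2le : (Q 2 2).re ≤ t ^ 2 * α' := by linarith [hP2.1]
  have hprod : (Q 2 2).re * (Q 1 1).re ≤ (t ^ 2 * α') * α' :=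
    mul_le_mul hq2le hq1le hQ1.1 (by positivity)
  have hQabs : ‖Q 0 3‖ ≤ α' * t := by
    nlinarith [Complex.sq_norm (Q 0 3), norm_nonneg (Q 0 3), hprod, hb2,
      mul_nonneg hα' ht.le]
  -- the corner entries
  have h03' : P 0 3 + Q 0 3 = -((α : ℂ) + ((α' * t : ℝ) : ℂ)) * u := by
    rw [h03]; push_cast; ring
  obtain ⟨hP03, hQ03⟩ := triangle_eq α (α' * t) hα (mul_nonneg hα' ht.le) u (P 0 3) (Q 0 3)
    hu hPabs hQabs h03'
  -- equalities on the diagonal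
  have hP03abs : ‖P 0 3‖ = α := by
    rw [hP03, show -((α : ℝ) : ℂ) = (((-α : ℝ)) : ℂ) by push_cast; ring, norm_mul,
      Complex.norm_real, Real.norm_eq_abs, hu, mul_one, _root_.abs_of_nonpos (by linarith)]
    ring
  have hQ03abs : ‖Q 0 3‖ = α' * t := by
    rw [hQ03, show -(((α' * t : ℝ)) : ℂ) = (((-(α' * t) : ℝ)) : ℂ) by push_cast; ring,
      norm_mul, Complex.norm_real, Real.norm_eq_abs, hu, mul_one,
      _root_.abs_of_nonpos (neg_nonpos.mpr (by positivity))]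
    ring
  have hnP : α ^ 2 ≤ (P 0 0).re * (P 3 3).re := by
    rw [← hP03abs, Complex.sq_norm]; exact hb1
  have hnQ : (α' * t) ^ 2 ≤ (Q 2 2).re * (Q 1 1).re := by
    rw [← hQ03abs, Complex.sq_norm]; exact hb2
  obtain ⟨ha, hd⟩ := squeeze1 α (P 0 0).re (P 3 3).re hα hP0.1 hP3.1
    (by linarith [hQ0.1]) (by linarith [hQ3.1]) hnP
  obtain ⟨hbq, hcq⟩ := squeeze2 t α' (Q 1 1).re (Q 2 2).re ht hα' hQ1.1 hQ2.1
    (by linarith [hP1.1]) (by linarith [hP2.1]) hnQ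
  -- complex diagonal values of P
  have hP00c : P 0 0 = (α : ℂ) := by
    apply Complex.ext <;> simp [ha, hP0.2]
  have hP33c : P 3 3 = (α : ℂ) := by
    apply Complex.ext <;> simp [hd, hP3.2]
  have hP11c : P 1 1 = 0 := by
    apply Complex.ext <;> simp [hP1.2] <;> linarith
  have hP22c : P 2 2 = 0 := by
    apply Complex.ext <;> simp [hP2.2] <;> linarith
  -- vanishing of the remaining entries of P
  have hPher : ∀ i j, P j i = conj (P i j) := by
    intro i j
    have := congrFun (congrFun hP.1 j) i
    simp only [conjTranspose_apply] at this
    rw [← this]; rfl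
  have hPzero : ∀ i j : Fin 4, i ≠ j → (P j j).re = 0 → P i j = 0 := by
    intro i j hij hjj
    have hb := psd_entry_sq hP i j hij
    rw [hjj, mul_zero] at hb
    exact Complex.normSq_eq_zero.mp (le_antisymm hb (Complex.normSq_nonneg _))
  have hre1 : (P 1 1).re = 0 := by rw [hP11c]; simp
  have hre2 : (P 2 2).re = 0 := by rw [hP22c]; simp
  have hP01 : P 0 1 = 0 := hPzero 0 1 (by decide) hre1
  have hP21 : P 2 1 = 0 := hPzero 2 1 (by decide) hre1
  have hP31 : P 3 1 = 0 := hPzero 3 1 (by decide) hre1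
  have hP02 : P 0 2 = 0 := hPzero 0 2 (by decide) hre2
  have hP12 : P 1 2 = 0 := hPzero 1 2 (by decide) hre2
  have hP32 : P 3 2 = 0 := hPzero 3 2 (by decide) hre2
  have hP10 : P 1 0 = 0 := by rw [hPher 0 1, hP01, map_zero]
  have hP12' : P 2 1 = 0 := hP21
  have hP20 : P 2 0 = 0 := by rw [hPher 0 2, hP02, map_zero]
  have hP13 : P 1 3 = 0 := by rw [hPher 3 1, hP31, map_zero]
  have hP23 : P 2 3 = 0 := by rw [hPher 3 2, hP32, map_zero]
  -- the (3,0) entry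
  have hconj_u : conj u = exp (-θ * I) := by
    rw [hudef, ← Complex.exp_conj]
    congr 1
    simp [Complex.conj_I]
  have hP30 : P 3 0 = -(α : ℂ) * exp (-θ * I) := by
    rw [hPher 0 3, hP03, _root_.map_mul, map_neg, Complex.conj_ofReal, hconj_u]
  have hP03' : P 0 3 = -(α : ℂ) * exp (θ * I) := by rw [hP03, hudef]
  -- remaining entry equations
  have h01 : P 0 1 + Q 0 1 = 0 := by have := Matrix.ext_iff.mpr hM 0 1; simpa using this
  have h02 : P 0 2 + Q 0 2 = 0 := by have := Matrix.ext_iff.mpr hM 0 2; simpa using this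
  have h10 : P 1 0 + Q 1 0 = 0 := by have := Matrix.ext_iff.mpr hM 1 0; simpa using this
  have h12 : P 1 2 + Q 1 2 = 0 := by have := Matrix.ext_iff.mpr hM 1 2; simpa using this
  have h13 : P 1 3 + Q 1 3 = 0 := by have := Matrix.ext_iff.mpr hM 1 3; simpa using this
  have h20 : P 2 0 + Q 2 0 = 0 := by have := Matrix.ext_iff.mpr hM 2 0; simpa using this
  have h21 : P 2 1 + Q 2 1 = 0 := by have := Matrix.ext_iff.mpr hM 2 1; simpa using this
  have h23 : P 2 3 + Q 2 3 = 0 := by have := Matrix.ext_iff.mpr hM 2 3; simpa using this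
  have h30 : P 3 0 + Q 3 0 = -((α : ℂ) + (α' : ℂ) * t) * exp (-θ * I) := by
    have := Matrix.ext_iff.mpr hM 3 0; simpa using this
  have h31 : P 3 1 + Q 3 1 = 0 := by have := Matrix.ext_iff.mpr hM 3 1; simpa using this
  have h32 : P 3 2 + Q 3 2 = 0 := by have := Matrix.ext_iff.mpr hM 3 2; simpa using this
  -- Q entries
  have hQ00c : Q 0 0 = 0 := by linear_combination h00 - hP00c
  have hQ33c : Q 3 3 = 0 := by linear_combination h33 - hP33c
  have hQ11c : Q 1 1 = (α' : ℂ) := by linear_combination h11 - hP11c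
  have hQ22c : Q 2 2 = (t : ℂ) ^ 2 * α' := by linear_combination h22 - hP22c
  have hQ01 : Q 0 1 = 0 := by linear_combination h01 - hP01
  have hQ02 : Q 0 2 = 0 := by linear_combination h02 - hP02
  have hQ10 : Q 1 0 = 0 := by linear_combination h10 - hP10
  have hQ12 : Q 1 2 = 0 := by linear_combination h12 - hP12
  have hQ13 : Q 1 3 = 0 := by linear_combination h13 - hP13
  have hQ20 : Q 2 0 = 0 := by linear_combination h20 - hP20
  have hQ21 : Q 2 1 = 0 := by linear_combination h21 - hP21
  have hQ23 : Q 2 3 = 0 := by linear_combination h23 - hP23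
  have hQ31 : Q 3 1 = 0 := by linear_combination h31 - hP31
  have hQ32 : Q 3 2 = 0 := by linear_combination h32 - hP32
  have hQ03' : Q 0 3 = -(α' : ℂ) * t * exp (θ * I) := by
    rw [hQ03, hudef]; push_cast; ring
  have hQ30 : Q 3 0 = -(α' : ℂ) * t * exp (-θ * I) := by
    have : Q 3 0 = -((α : ℂ) + (α' : ℂ) * t) * exp (-θ * I) - P 3 0 := by
      linear_combination h30
    rw [this, hP30]; ring
  clear hM h00 h11 h22 h33 h03 h01 h02 h10 h12 h13 h20 h21 h23 h30 h31 h32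
  clear hP hQ hb1 hb2 hPher hPzero hprod hq1le hq2le hPabs hQabs hnP hnQ h03' hP03abs hQ03abs
  clear hG21 hG11 hG22 hG00 hG33 hP0 hP1 hP2 hP3 hQ0 hQ1 hQ2 hQ3 hre00 hre11 hre22 hre33
  constructor
  · ext i j
    fin_cases i <;> fin_cases j <;>
      simp [Matrix.vecHead, Matrix.vecTail, hP00c, hP01, hP02, hP03', hP10, hP11c, hP12, hP13,
        hP20, hP21, hP22c, hP23, hP30, hP31, hP32, hP33c, hudef]
  · ext i j
    fin_cases i <;> fin_cases j <;>
      simp [Matrix.vecHead, Matrix.vecTail, hQ00c, hQ01, hQ02, hQ03', hQ10, hQ11c, hQ12, hQ13,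
        hQ20, hQ21, hQ22c, hQ23, hQ30, hQ31, hQ32, hQ33c, hudef]
end

section
/- Let U = diag(1, e^{−2πi/3}, e^{−4πi/3}) ∈ M₃(ℂ). Then for all a, b, c ≥ 0, θ ∈ ℝ and all X ∈ M₃(ℂ), U* Φ[a,b,c;θ](X) U = Φ[a,b,c;θ−2π/3](X). Moreover p_θ = p_{θ−2π/3}, so that the map X ↦ U* Φ_θ(t)(X) U equals Φ_{θ−2π/3}(t) for every t > 0. -/
open Complex Matrix

noncomputable def PhiMap (a b c θ : ℝ) (X : Matrix (Fin 3) (Fin 3) ℂ) :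
    Matrix (Fin 3) (Fin 3) ℂ :=
  !![(a : ℂ) * X 0 0 + (b : ℂ) * X 1 1 + (c : ℂ) * X 2 2,
       -exp (θ * I) * X 0 1, -exp (-θ * I) * X 0 2;
     -exp (-θ * I) * X 1 0,
       (c : ℂ) * X 0 0 + (a : ℂ) * X 1 1 + (b : ℂ) * X 2 2, -exp (θ * I) * X 1 2;
     -exp (θ * I) * X 2 0, -exp (-θ * I) * X 2 1,
       (b : ℂ) * X 0 0 + (c : ℂ) * X 1 1 + (a : ℂ) * X 2 2]

noncomputable def pTheta (θ : ℝ) : ℝ :=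
  max (2 * Real.cos (θ + 2 * Real.pi / 3))
    (max (2 * Real.cos θ) (2 * Real.cos (θ - 2 * Real.pi / 3)))

noncomputable def PhiT (θ t : ℝ) : Matrix (Fin 3) (Fin 3) ℂ → Matrix (Fin 3) (Fin 3) ℂ :=
  PhiMap (1 - (pTheta θ - 1) * t / (1 - t + t ^ 2))
         ((pTheta θ - 1) * t ^ 2 / (1 - t + t ^ 2))
         ((pTheta θ - 1) / (1 - t + t ^ 2)) θ

noncomputable def Umat : Matrix (Fin 3) (Fin 3) ℂ :=
  Matrix.diagonal ![1, exp (-(2 * Real.pi / 3 : ℝ) * I), exp (-(4 * Real.pi / 3 : ℝ) * I)]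

/-- Product of two exponentials, up to an integer multiple of `2πi`. -/
lemma expProd2 (z w u : ℂ) (n : ℤ) (h : z + w = u + n * (2 * Real.pi * I)) :
    Complex.exp z * Complex.exp w = Complex.exp u := by
  rw [← Complex.exp_add, h, Complex.exp_add, Complex.exp_int_mul_two_pi_mul_I, mul_one]

/-- Product of three exponentials, up to an integer multiple of `2πi`. -/
lemma expProd3 (z w v u : ℂ) (n : ℤ) (h : z + w + v = u + n * (2 * Real.pi * I)) :
    Complex.exp z * Complex.exp w * Complex.exp v = Complex.exp u := by
  rw [← Complex.exp_add, ← Complex.exp_add, h, Complex.exp_add,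
    Complex.exp_int_mul_two_pi_mul_I, mul_one]

/-- Product of two exponentials equal to one. -/
lemma expProd1 (z w : ℂ) (n : ℤ) (h : z + w = n * (2 * Real.pi * I)) :
    Complex.exp z * Complex.exp w = 1 := by
  rw [← Complex.exp_add, h, Complex.exp_int_mul_two_pi_mul_I]

set_option maxHeartbeats 1600000 in
/-- Conjugation by the diagonal unitary `U = diag(1, e^{-2πi/3}, e^{-4πi/3})` carries
`Φ[a,b,c;θ]` to `Φ[a,b,c;θ-2π/3]`, and `p_θ = p_{θ-2π/3}`, so `U* Φ_θ(t)(·) U = Φ_{θ-2π/3}(t)`. -/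
theorem conjugation_shift (a b c θ : ℝ) (ha : 0 ≤ a) (hb : 0 ≤ b) (hc : 0 ≤ c) :
    (∀ X : Matrix (Fin 3) (Fin 3) ℂ,
        Umatᴴ * PhiMap a b c θ X * Umat = PhiMap a b c (θ - 2 * Real.pi / 3) X) ∧
    pTheta θ = pTheta (θ - 2 * Real.pi / 3) ∧
    ∀ t : ℝ, 0 < t → ∀ X : Matrix (Fin 3) (Fin 3) ℂ,
        Umatᴴ * PhiT θ t X * Umat = PhiT (θ - 2 * Real.pi / 3) t X := by
  have key : ∀ a b c : ℝ, ∀ X : Matrix (Fin 3) (Fin 3) ℂ,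
      Umatᴴ * PhiMap a b c θ X * Umat = PhiMap a b c (θ - 2 * Real.pi / 3) X := by
    intro a b c X
    ext i j
    fin_cases i <;> fin_cases j <;>
      simp [Umat, PhiMap, Matrix.mul_apply, Fin.sum_univ_three, Matrix.diagonal,
        ← Complex.exp_conj, _root_.map_mul, map_neg, map_div₀, Complex.conj_I,
        Complex.conj_ofReal, Complex.conj_ofNat]
    · linear_combination X 0 1 *
        expProd2 ((θ:ℂ) * I) (-(2 * (Real.pi:ℂ) / 3 * I)) (((θ:ℂ) - 2 * Real.pi / 3) * I) 0
          (by push_cast; ring)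
    · linear_combination X 0 2 *
        expProd2 (-((θ:ℂ) * I)) (-(4 * (Real.pi:ℂ) / 3 * I)) ((2 * (Real.pi:ℂ) / 3 - θ) * I) (-1)
          (by push_cast; ring)
    · linear_combination X 1 0 *
        expProd2 (2 * (Real.pi:ℂ) / 3 * I) (-((θ:ℂ) * I)) ((2 * (Real.pi:ℂ) / 3 - θ) * I) 0
          (by push_cast; ring)
    · linear_combination ((c:ℂ) * X 0 0 + (a:ℂ) * X 1 1 + (b:ℂ) * X 2 2) *
        expProd1 (2 * (Real.pi:ℂ) / 3 * I) (-(2 * (Real.pi:ℂ) / 3 * I)) 0 (by push_cast; ring)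
    · linear_combination X 1 2 *
        expProd3 (2 * (Real.pi:ℂ) / 3 * I) ((θ:ℂ) * I) (-(4 * (Real.pi:ℂ) / 3 * I))
          (((θ:ℂ) - 2 * Real.pi / 3) * I) 0 (by push_cast; ring)
    · linear_combination X 2 0 *
        expProd2 (4 * (Real.pi:ℂ) / 3 * I) ((θ:ℂ) * I) (((θ:ℂ) - 2 * Real.pi / 3) * I) 1
          (by push_cast; ring)
    · linear_combination X 2 1 *
        expProd3 (4 * (Real.pi:ℂ) / 3 * I) (-((θ:ℂ) * I)) (-(2 * (Real.pi:ℂ) / 3 * I))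
          ((2 * (Real.pi:ℂ) / 3 - θ) * I) 0 (by push_cast; ring)
    · linear_combination ((b:ℂ) * X 0 0 + (c:ℂ) * X 1 1 + (a:ℂ) * X 2 2) *
        expProd1 (4 * (Real.pi:ℂ) / 3 * I) (-(4 * (Real.pi:ℂ) / 3 * I)) 0 (by push_cast; ring)
  have hp : pTheta θ = pTheta (θ - 2 * Real.pi / 3) := by
    unfold pTheta
    have h1 : θ - 2 * Real.pi / 3 + 2 * Real.pi / 3 = θ := by ring
    have h2 : θ - 2 * Real.pi / 3 - 2 * Real.pi / 3 = θ + 2 * Real.pi / 3 - 2 * Real.pi := by ring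
    rw [h1, h2, Real.cos_sub_two_pi]
    rw [max_left_comm, max_comm (2 * Real.cos (θ + 2 * Real.pi / 3))]
  refine ⟨key a b c, hp, fun t ht X => ?_⟩
  unfold PhiT
  rw [hp]
  exact key _ _ _ X
end

section
/- Let t > 0 and −π/3 < θ < π/3. Then for every product vector ξ⊗η ∈ ℂ³⊗ℂ³ of one of the following forms, one has Φ_θ(t)(ξξ*)·η̄ = 0 (where η̄ is the entrywise complex conjugate of η): (i) ξ = (a₁,a₂,a₃)ᵗ, η = (ā₁,ā₂,ā₃)ᵗ with |a₁| = |a₂| = |a₃|; (ii) ξ = (0, √t β, 1)ᵗ, η = (0, √t β̄, t e^{iθ})ᵗ with |β| = 1; (iii) ξ = (1, 0, √t β)ᵗ, η = (t e^{iθ}, 0, √t β̄)ᵗ with |β| = 1; (iv) ξ = (√t β, 1, 0)ᵗ, η = (√t β̄, t e^{iθ}, 0)ᵗ with |β| = 1. -/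
open Complex Matrix

set_option maxHeartbeats 1600000 in
/-- The four families of product vectors annihilated by `Φ_θ(t)` for `-π/3 < θ < π/3`:
`Φ_θ(t)(ξξ*) η̄ = 0` in each case. -/
theorem product_vectors_in_kernel (t θ : ℝ) (ht : 0 < t)
    (hθl : -(Real.pi / 3) < θ) (hθr : θ < Real.pi / 3) :
    (∀ a₁ a₂ a₃ : ℂ, ‖a₁‖ = ‖a₂‖ → ‖a₂‖ = ‖a₃‖ →
      PhiT θ t (vecMulVec (![a₁, a₂, a₃]) (star (![a₁, a₂, a₃] : Fin 3 → ℂ))) *ᵥ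
        star (![starRingEnd ℂ a₁, starRingEnd ℂ a₂, starRingEnd ℂ a₃] : Fin 3 → ℂ) = 0) ∧
    (∀ β : ℂ, ‖β‖ = 1 →
      PhiT θ t (vecMulVec (![0, (Real.sqrt t : ℂ) * β, 1])
          (star (![0, (Real.sqrt t : ℂ) * β, 1] : Fin 3 → ℂ))) *ᵥ
        star (![0, (Real.sqrt t : ℂ) * starRingEnd ℂ β, (t : ℂ) * exp (θ * I)] : Fin 3 → ℂ)
        = 0) ∧
    (∀ β : ℂ, ‖β‖ = 1 →
      PhiT θ t (vecMulVec (![1, 0, (Real.sqrt t : ℂ) * β])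
          (star (![1, 0, (Real.sqrt t : ℂ) * β] : Fin 3 → ℂ))) *ᵥ
        star (![(t : ℂ) * exp (θ * I), 0, (Real.sqrt t : ℂ) * starRingEnd ℂ β] : Fin 3 → ℂ)
        = 0) ∧
    (∀ β : ℂ, ‖β‖ = 1 →
      PhiT θ t (vecMulVec (![(Real.sqrt t : ℂ) * β, 1, 0])
          (star (![(Real.sqrt t : ℂ) * β, 1, 0] : Fin 3 → ℂ))) *ᵥ
        star (![(Real.sqrt t : ℂ) * starRingEnd ℂ β, (t : ℂ) * exp (θ * I), 0] : Fin 3 → ℂ)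
        = 0) := by
  have hπ := Real.pi_pos
  have hp : pTheta θ = 2 * Real.cos θ := by
    have hc : Real.cos (Real.pi / 3) ≤ Real.cos θ := by
      rw [← Real.cos_abs θ]
      exact Real.cos_le_cos_of_nonneg_of_le_pi (abs_nonneg θ) (by linarith)
        (by rw [abs_le]; constructor <;> linarith)
    have h1 : 2 * Real.cos (θ + 2 * Real.pi / 3) ≤ 2 * Real.cos θ := by
      have h := Real.cos_le_cos_of_nonneg_of_le_pi (x := Real.pi / 3)
        (y := θ + 2 * Real.pi / 3) (by linarith) (by linarith) (by linarith)
      linarith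
    have h2 : 2 * Real.cos (θ - 2 * Real.pi / 3) ≤ 2 * Real.cos θ := by
      have e : Real.cos (θ - 2 * Real.pi / 3) = Real.cos (2 * Real.pi / 3 - θ) := by
        rw [← Real.cos_neg]; ring_nf
      have h := Real.cos_le_cos_of_nonneg_of_le_pi (x := Real.pi / 3)
        (y := 2 * Real.pi / 3 - θ) (by linarith) (by linarith) (by linarith)
      rw [e]; linarith
    unfold pTheta
    rw [max_eq_left h2, max_eq_right h1]
  have hD : ((1 : ℂ) - t + t ^ 2) ≠ 0 := by
    have h : (1 - t + t ^ 2 : ℝ) ≠ 0 := by nlinarith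
    have := Complex.ofReal_ne_zero.mpr h
    push_cast at this
    exact this
  have hE : cexp (↑θ * I) + cexp (-(↑θ * I)) = ((pTheta θ : ℝ) : ℂ) := by
    rw [hp]; push_cast [Complex.ofReal_cos]
    rw [Complex.cos]; ring
  have hEE : cexp (↑θ * I) * cexp (-(↑θ * I)) = 1 := by
    rw [← Complex.exp_add]; ring_nf; exact Complex.exp_zero
  have hs : ((Real.sqrt t : ℝ) : ℂ) * ((Real.sqrt t : ℝ) : ℂ) = (t : ℂ) := by
    rw [← Complex.ofReal_mul, Real.mul_self_sqrt ht.le]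
  have habc : (1 - ((pTheta θ : ℝ) - 1 : ℂ) * (t : ℂ) / (1 - (t : ℂ) + (t : ℂ) ^ 2))
      + ((pTheta θ : ℝ) - 1 : ℂ) * (t : ℂ) ^ 2 / (1 - (t : ℂ) + (t : ℂ) ^ 2)
      + ((pTheta θ : ℝ) - 1 : ℂ) / (1 - (t : ℂ) + (t : ℂ) ^ 2) = ((pTheta θ : ℝ) : ℂ) := by
    field_simp
    ring
  refine ⟨?_, ?_, ?_, ?_⟩
  · intro a₁ a₂ a₃ h12 h23
    have key : ∀ x y : ℂ, ‖x‖ = ‖y‖ →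
        y * (starRingEnd ℂ) y = x * (starRingEnd ℂ) x := by
      intro x y h
      rw [Complex.mul_conj, Complex.mul_conj, ← Complex.sq_norm, ← Complex.sq_norm, h]
    have n2 := key a₁ a₂ h12
    have n3 := key a₁ a₃ (h12.trans h23)
    funext i
    fin_cases i
    · simp only [PhiT, PhiMap]
      simp [vecMulVec, mulVec, dotProduct, Fin.sum_univ_three]
      linear_combination
        (((pTheta θ : ℝ) - 1 : ℂ) * (t : ℂ) ^ 2 / (1 - (t : ℂ) + (t : ℂ) ^ 2)
            - cexp (↑θ * I)) * a₁ * n2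
        + (((pTheta θ : ℝ) - 1 : ℂ) / (1 - (t : ℂ) + (t : ℂ) ^ 2)
            - cexp (-(↑θ * I))) * a₁ * n3
        + a₁ * (a₁ * (starRingEnd ℂ) a₁) * habc
        - a₁ * (a₁ * (starRingEnd ℂ) a₁) * hE
    · simp only [PhiT, PhiMap]
      simp [vecMulVec, mulVec, dotProduct, Fin.sum_univ_three]
      linear_combination
        (1 - ((pTheta θ : ℝ) - 1 : ℂ) * (t : ℂ) / (1 - (t : ℂ) + (t : ℂ) ^ 2)) * a₂ * n2
        + (((pTheta θ : ℝ) - 1 : ℂ) * (t : ℂ) ^ 2 / (1 - (t : ℂ) + (t : ℂ) ^ 2)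
            - cexp (↑θ * I)) * a₂ * n3
        + a₂ * (a₁ * (starRingEnd ℂ) a₁) * habc
        - a₂ * (a₁ * (starRingEnd ℂ) a₁) * hE
    · simp only [PhiT, PhiMap]
      simp [vecMulVec, mulVec, dotProduct, Fin.sum_univ_three]
      linear_combination
        (((pTheta θ : ℝ) - 1 : ℂ) / (1 - (t : ℂ) + (t : ℂ) ^ 2)
            - cexp (-(↑θ * I))) * a₃ * n2
        + (1 - ((pTheta θ : ℝ) - 1 : ℂ) * (t : ℂ) / (1 - (t : ℂ) + (t : ℂ) ^ 2)) * a₃ * n3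
        + a₃ * (a₁ * (starRingEnd ℂ) a₁) * habc
        - a₃ * (a₁ * (starRingEnd ℂ) a₁) * hE
  · intro β hβ
    have hb : β * (starRingEnd ℂ) β = 1 := by
      rw [Complex.mul_conj, ← Complex.sq_norm, hβ]; norm_num
    have hsb : ((Real.sqrt t : ℝ) : ℂ) * β * (((Real.sqrt t : ℝ) : ℂ) * (starRingEnd ℂ) β)
        = (t : ℂ) := by
      linear_combination (β * (starRingEnd ℂ) β) * hs + (t : ℂ) * hb
    funext i
    fin_cases i
    · simp only [PhiT, PhiMap]
      simp [vecMulVec, mulVec, dotProduct, Fin.sum_univ_three, _root_.map_mul,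
        ← Complex.exp_conj, Complex.conj_ofReal, Complex.conj_I]
    · simp only [PhiT, PhiMap]
      simp [vecMulVec, mulVec, dotProduct, Fin.sum_univ_three, _root_.map_mul,
        ← Complex.exp_conj, Complex.conj_ofReal, Complex.conj_I]
      linear_combination
        (1 - ((pTheta θ : ℝ) - 1 : ℂ) * (t : ℂ) / (1 - (t : ℂ) + (t : ℂ) ^ 2))
            * (((Real.sqrt t : ℝ) : ℂ) * β) * hsb
        - (((Real.sqrt t : ℝ) : ℂ) * β * (t : ℂ)) * hEE
    · simp only [PhiT, PhiMap]
      simp [vecMulVec, mulVec, dotProduct, Fin.sum_univ_three, _root_.map_mul,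
        ← Complex.exp_conj, Complex.conj_ofReal, Complex.conj_I]
      linear_combination
        (((pTheta θ : ℝ) - 1 : ℂ) / (1 - (t : ℂ) + (t : ℂ) ^ 2) * (t : ℂ)
            * cexp (-(↑θ * I)) - cexp (-(↑θ * I))) * hsb
  · intro β hβ
    have hb : β * (starRingEnd ℂ) β = 1 := by
      rw [Complex.mul_conj, ← Complex.sq_norm, hβ]; norm_num
    have hsb : ((Real.sqrt t : ℝ) : ℂ) * β * (((Real.sqrt t : ℝ) : ℂ) * (starRingEnd ℂ) β)
        = (t : ℂ) := by
      linear_combination (β * (starRingEnd ℂ) β) * hs + (t : ℂ) * hb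
    funext i
    fin_cases i
    · simp only [PhiT, PhiMap]
      simp [vecMulVec, mulVec, dotProduct, Fin.sum_univ_three, _root_.map_mul,
        ← Complex.exp_conj, Complex.conj_ofReal, Complex.conj_I]
      linear_combination
        (((pTheta θ : ℝ) - 1 : ℂ) / (1 - (t : ℂ) + (t : ℂ) ^ 2) * (t : ℂ)
            * cexp (-(↑θ * I)) - cexp (-(↑θ * I))) * hsb
    · simp only [PhiT, PhiMap]
      simp [vecMulVec, mulVec, dotProduct, Fin.sum_univ_three, _root_.map_mul,
        ← Complex.exp_conj, Complex.conj_ofReal, Complex.conj_I]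
    · simp only [PhiT, PhiMap]
      simp [vecMulVec, mulVec, dotProduct, Fin.sum_univ_three, _root_.map_mul,
        ← Complex.exp_conj, Complex.conj_ofReal, Complex.conj_I]
      linear_combination
        (1 - ((pTheta θ : ℝ) - 1 : ℂ) * (t : ℂ) / (1 - (t : ℂ) + (t : ℂ) ^ 2))
            * (((Real.sqrt t : ℝ) : ℂ) * β) * hsb
        - (((Real.sqrt t : ℝ) : ℂ) * β * (t : ℂ)) * hEE
  · intro β hβ
    have hb : β * (starRingEnd ℂ) β = 1 := by
      rw [Complex.mul_conj, ← Complex.sq_norm, hβ]; norm_num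
    have hsb : ((Real.sqrt t : ℝ) : ℂ) * β * (((Real.sqrt t : ℝ) : ℂ) * (starRingEnd ℂ) β)
        = (t : ℂ) := by
      linear_combination (β * (starRingEnd ℂ) β) * hs + (t : ℂ) * hb
    funext i
    fin_cases i
    · simp only [PhiT, PhiMap]
      simp [vecMulVec, mulVec, dotProduct, Fin.sum_univ_three, _root_.map_mul,
        ← Complex.exp_conj, Complex.conj_ofReal, Complex.conj_I]
      linear_combination
        (1 - ((pTheta θ : ℝ) - 1 : ℂ) * (t : ℂ) / (1 - (t : ℂ) + (t : ℂ) ^ 2))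
            * (((Real.sqrt t : ℝ) : ℂ) * β) * hsb
        - (((Real.sqrt t : ℝ) : ℂ) * β * (t : ℂ)) * hEE
    · simp only [PhiT, PhiMap]
      simp [vecMulVec, mulVec, dotProduct, Fin.sum_univ_three, _root_.map_mul,
        ← Complex.exp_conj, Complex.conj_ofReal, Complex.conj_I]
      linear_combination
        (((pTheta θ : ℝ) - 1 : ℂ) / (1 - (t : ℂ) + (t : ℂ) ^ 2) * (t : ℂ)
            * cexp (-(↑θ * I)) - cexp (-(↑θ * I))) * hsb
    · simp only [PhiT, PhiMap]
      simp [vecMulVec, mulVec, dotProduct, Fin.sum_univ_three, _root_.map_mul,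
        ← Complex.exp_conj, Complex.conj_ofReal, Complex.conj_I]
end

section
/- Let t > 0, −π/3 < θ < π/3 and (θ, t) ≠ (0, 1). Then the ten rank-one matrices |z⟩⟨z| ∈ M₉(ℂ), where z ranges over the ten product vectors z₁(1,1,1), z₁(−1,1,1), z₁(1,−1,1), z₁(1,1,−1), z₂(1), z₂(−1), z₃(1), z₃(−1), z₄(1), z₄(−1), are linearly independent over ℂ. -/
open Complex Matrix BigOperators

/-- The tensor (Kronecker) product of two vectors in `ℂ³`, as a vector in `ℂ⁹`:
the component `ξ_i η_j` sits at index `3i + j` (0-based). -/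
def kron (ξ η : Fin 3 → ℂ) : Fin 9 → ℂ :=
  fun k => ξ ⟨k.val / 3, by have := k.isLt; omega⟩ * η ⟨k.val % 3, by have := k.isLt; omega⟩

/-- `z₁(a₁,a₂,a₃) = (a₁,a₂,a₃) ⊗ (ā₁,ā₂,ā₃)`. -/
noncomputable def z1 (a₁ a₂ a₃ : ℂ) : Fin 9 → ℂ :=
  kron ![a₁, a₂, a₃] ![starRingEnd ℂ a₁, starRingEnd ℂ a₂, starRingEnd ℂ a₃]

/-- `z₂(β) = (0, √t β, 1) ⊗ (0, √t β̄, t e^{iθ})`. -/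
noncomputable def z2 (t θ : ℝ) (β : ℂ) : Fin 9 → ℂ :=
  kron ![0, (Real.sqrt t : ℂ) * β, 1]
       ![0, (Real.sqrt t : ℂ) * starRingEnd ℂ β, (t : ℂ) * exp (θ * I)]

/-- `z₃(β) = (1, 0, √t β) ⊗ (t e^{iθ}, 0, √t β̄)`. -/
noncomputable def z3 (t θ : ℝ) (β : ℂ) : Fin 9 → ℂ :=
  kron ![1, 0, (Real.sqrt t : ℂ) * β]
       ![(t : ℂ) * exp (θ * I), 0, (Real.sqrt t : ℂ) * starRingEnd ℂ β]

/-- `z₄(β) = (√t β, 1, 0) ⊗ (√t β̄, t e^{iθ}, 0)`. -/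
noncomputable def z4 (t θ : ℝ) (β : ℂ) : Fin 9 → ℂ :=
  kron ![(Real.sqrt t : ℂ) * β, 1, 0]
       ![(Real.sqrt t : ℂ) * starRingEnd ℂ β, (t : ℂ) * exp (θ * I), 0]

/-- The pure (unnormalized) state `|z⟩⟨z|`. -/
noncomputable def rank1 (v : Fin 9 → ℂ) : Matrix (Fin 9) (Fin 9) ℂ :=
  vecMulVec v (star v)

/-- The separable state `ρ₀(θ,t)`. -/
noncomputable def rho0 (θ t : ℝ) : Matrix (Fin 9) (Fin 9) ℂ :=
  !![3, 0, 0, 0, 1 + exp (-θ * I), 0, 0, 0, 1 + exp (θ * I);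
     0, 1 + (t : ℂ), 0, 0, 0, 0, 0, 0, 0;
     0, 0, 1 + 1 / (t : ℂ), 0, 0, 0, 0, 0, 0;
     0, 0, 0, 1 + 1 / (t : ℂ), 0, 0, 0, 0, 0;
     1 + exp (θ * I), 0, 0, 0, 3, 0, 0, 0, 1 + exp (-θ * I);
     0, 0, 0, 0, 0, 1 + (t : ℂ), 0, 0, 0;
     0, 0, 0, 0, 0, 0, 1 + (t : ℂ), 0, 0;
     0, 0, 0, 0, 0, 0, 0, 1 + 1 / (t : ℂ), 0;
     1 + exp (-θ * I), 0, 0, 0, 1 + exp (θ * I), 0, 0, 0, 3]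

namespace TenAux

lemma kron_app_0 (ξ η : Fin 3 → ℂ) : kron ξ η 0 = ξ 0 * η 0 := rfl
lemma kron_app_1 (ξ η : Fin 3 → ℂ) : kron ξ η 1 = ξ 0 * η 1 := rfl
lemma kron_app_2 (ξ η : Fin 3 → ℂ) : kron ξ η 2 = ξ 0 * η 2 := rfl
lemma kron_app_4 (ξ η : Fin 3 → ℂ) : kron ξ η 4 = ξ 1 * η 1 := rfl
lemma kron_app_5 (ξ η : Fin 3 → ℂ) : kron ξ η 5 = ξ 1 * η 2 := rfl
lemma kron_app_7 (ξ η : Fin 3 → ℂ) : kron ξ η 7 = ξ 2 * η 1 := rfl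
lemma kron_app_8 (ξ η : Fin 3 → ℂ) : kron ξ η 8 = ξ 2 * η 2 := rfl

lemma vec3_2 {α : Type*} (a b c : α) : ![a,b,c] (2 : Fin 3) = c := rfl

lemma vec10_0 {α : Type*} (a0 a1 a2 a3 a4 a5 a6 a7 a8 a9 : α) : ![a0,a1,a2,a3,a4,a5,a6,a7,a8,a9] (0 : Fin 10) = a0 := rfl
lemma vec10_1 {α : Type*} (a0 a1 a2 a3 a4 a5 a6 a7 a8 a9 : α) : ![a0,a1,a2,a3,a4,a5,a6,a7,a8,a9] (1 : Fin 10) = a1 := rfl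
lemma vec10_2 {α : Type*} (a0 a1 a2 a3 a4 a5 a6 a7 a8 a9 : α) : ![a0,a1,a2,a3,a4,a5,a6,a7,a8,a9] (2 : Fin 10) = a2 := rfl
lemma vec10_3 {α : Type*} (a0 a1 a2 a3 a4 a5 a6 a7 a8 a9 : α) : ![a0,a1,a2,a3,a4,a5,a6,a7,a8,a9] (3 : Fin 10) = a3 := rfl
lemma vec10_4 {α : Type*} (a0 a1 a2 a3 a4 a5 a6 a7 a8 a9 : α) : ![a0,a1,a2,a3,a4,a5,a6,a7,a8,a9] (4 : Fin 10) = a4 := rfl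
lemma vec10_5 {α : Type*} (a0 a1 a2 a3 a4 a5 a6 a7 a8 a9 : α) : ![a0,a1,a2,a3,a4,a5,a6,a7,a8,a9] (5 : Fin 10) = a5 := rfl
lemma vec10_6 {α : Type*} (a0 a1 a2 a3 a4 a5 a6 a7 a8 a9 : α) : ![a0,a1,a2,a3,a4,a5,a6,a7,a8,a9] (6 : Fin 10) = a6 := rfl
lemma vec10_7 {α : Type*} (a0 a1 a2 a3 a4 a5 a6 a7 a8 a9 : α) : ![a0,a1,a2,a3,a4,a5,a6,a7,a8,a9] (7 : Fin 10) = a7 := rfl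
lemma vec10_8 {α : Type*} (a0 a1 a2 a3 a4 a5 a6 a7 a8 a9 : α) : ![a0,a1,a2,a3,a4,a5,a6,a7,a8,a9] (8 : Fin 10) = a8 := rfl
lemma vec10_9 {α : Type*} (a0 a1 a2 a3 a4 a5 a6 a7 a8 a9 : α) : ![a0,a1,a2,a3,a4,a5,a6,a7,a8,a9] (9 : Fin 10) = a9 := rfl

lemma conj_one' : (starRingEnd ℂ) 1 = 1 := map_one _

theorem sum_univ_nine' {M : Type*} [AddCommMonoid M] (f : Fin 9 → M) :
    ∑ i, f i = f 0 + f 1 + f 2 + f 3 + f 4 + f 5 + f 6 + f 7 + f 8 := by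
  rw [Fin.sum_univ_castSucc, Fin.sum_univ_eight]; rfl
theorem sum_univ_ten' {M : Type*} [AddCommMonoid M] (f : Fin 10 → M) :
    ∑ i, f i = f 0 + f 1 + f 2 + f 3 + f 4 + f 5 + f 6 + f 7 + f 8 + f 9 := by
  rw [Fin.sum_univ_castSucc, sum_univ_nine']; rfl

end TenAux

/-- The ten pure product states coming from the product vectors
`z₁(1,1,1), z₁(-1,1,1), z₁(1,-1,1), z₁(1,1,-1), z₂(±1), z₃(±1), z₄(±1)`
are linearly independent. -/
theorem ten_pure_product_states_linearIndependent (t θ : ℝ) (ht : 0 < t)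
    (hθl : -(Real.pi / 3) < θ) (hθr : θ < Real.pi / 3) (hne : ¬(θ = 0 ∧ t = 1)) :
    LinearIndependent ℂ
      (![rank1 (z1 1 1 1), rank1 (z1 (-1) 1 1), rank1 (z1 1 (-1) 1), rank1 (z1 1 1 (-1)),
         rank1 (z2 t θ 1), rank1 (z2 t θ (-1)),
         rank1 (z3 t θ 1), rank1 (z3 t θ (-1)),
         rank1 (z4 t θ 1), rank1 (z4 t θ (-1))] :
        Fin 10 → Matrix (Fin 9) (Fin 9) ℂ) := by
  classical
  rw [Fintype.linearIndependent_iff]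
  intro g hg
  rw [TenAux.sum_univ_ten'] at hg
  simp only [TenAux.vec10_0, TenAux.vec10_1, TenAux.vec10_2, TenAux.vec10_3, TenAux.vec10_4,
    TenAux.vec10_5, TenAux.vec10_6, TenAux.vec10_7, TenAux.vec10_8, TenAux.vec10_9] at hg
  have hM : ∀ p q : Fin 9,
      g 0 * rank1 (z1 1 1 1) p q + g 1 * rank1 (z1 (-1) 1 1) p q +
      g 2 * rank1 (z1 1 (-1) 1) p q + g 3 * rank1 (z1 1 1 (-1)) p q +
      g 4 * rank1 (z2 t θ 1) p q + g 5 * rank1 (z2 t θ (-1)) p q +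
      g 6 * rank1 (z3 t θ 1) p q + g 7 * rank1 (z3 t θ (-1)) p q +
      g 8 * rank1 (z4 t θ 1) p q + g 9 * rank1 (z4 t θ (-1)) p q = 0 := by
    intro p q
    have h := congrFun (congrFun hg p) q
    simpa [Matrix.add_apply, Matrix.smul_apply, smul_eq_mul, Matrix.zero_apply] using h
  set r : ℂ := ((Real.sqrt t : ℝ) : ℂ) with hrdef
  set T : ℂ := ((t : ℝ) : ℂ) with hTdef
  set e : ℂ := Complex.exp ((θ : ℂ) * I) with hedef
  set f : ℂ := (starRingEnd ℂ) e with hfdef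
  have hr : r * r = T := by
    rw [hrdef, hTdef, ← Complex.ofReal_mul, Real.mul_self_sqrt ht.le]
  have hrne : r ≠ 0 := by
    simp only [hrdef, ne_eq, Complex.ofReal_eq_zero]
    exact ne_of_gt (Real.sqrt_pos.mpr ht)
  have hTne : T ≠ 0 := by
    simp only [hTdef, ne_eq, Complex.ofReal_eq_zero]; exact ne_of_gt ht
  have hef : e * f = 1 := by
    rw [hfdef, hedef, ← Complex.exp_conj, ← Complex.exp_add]
    simp [Complex.exp_eq_one_iff]
  have hfne : f ≠ 0 := right_ne_zero_of_mul_eq_one hef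
  have hene : e ≠ 0 := left_ne_zero_of_mul_eq_one hef
  have hf2 : (2 : ℂ) - f ≠ 0 := by
    intro h
    have hff : f = 2 := by linear_combination -h
    have habs : ‖f‖ = 1 := by
      rw [hfdef, hedef, ← Complex.exp_conj]
      simp [Complex.norm_exp]
    rw [hff] at habs
    norm_num [Complex.norm_two] at habs
  have E1 := hM 1 2
  have E2 := hM 1 5
  have E3 := hM 1 8
  have E4 := hM 4 7
  have E5 := hM 0 2
  have E6 := hM 0 1
  have E7 := hM 4 4
  have E8 := hM 8 8
  have E9 := hM 0 0
  have E10 := hM 4 8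
  simp only [rank1, vecMulVec_apply, Pi.star_apply, z1, z2, z3, z4,
    TenAux.kron_app_0, TenAux.kron_app_1, TenAux.kron_app_2, TenAux.kron_app_4,
    TenAux.kron_app_5, TenAux.kron_app_7, TenAux.kron_app_8,
    Matrix.cons_val_zero, Matrix.cons_val_one, Matrix.head_cons, TenAux.vec3_2,
    Complex.star_def, _root_.map_mul, map_neg, Complex.conj_ofReal, TenAux.conj_one',
    Complex.conj_conj, mul_zero, zero_mul, mul_one, one_mul, mul_neg, neg_mul,
    neg_neg, add_zero, zero_add, map_zero] at E1 E2 E3 E4 E5 E6 E7 E8 E9 E10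
  -- abbreviations purely for readability of the combination coefficients
  have h01 : g 0 = g 1 := by linear_combination (E2 + E3) / 2
  have h02 : g 0 = g 2 := by linear_combination (E1 + E3) / 2
  have h03 : g 0 = g 3 := by linear_combination (E1 + E2) / 2
  have h45 : g 4 = g 5 := by
    have h : ((Real.sqrt t : ℂ) * Real.sqrt t * Real.sqrt t) * (g 4 - g 5) = 0 := by
      linear_combination E4 - E1
    exact sub_eq_zero.mp ((mul_eq_zero.mp h).resolve_left
      (mul_ne_zero (mul_ne_zero hrne hrne) hrne))
  have h67 : g 6 = g 7 := by
    have h : ((t : ℂ) * Complex.exp ((θ:ℂ) * I) * Real.sqrt t) * (g 6 - g 7) = 0 := by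
      linear_combination E5 - E2
    exact sub_eq_zero.mp ((mul_eq_zero.mp h).resolve_left
      (mul_ne_zero (mul_ne_zero hTne hene) hrne))
  have h89 : g 8 = g 9 := by
    have h : ((Real.sqrt t : ℂ) * Real.sqrt t * (Real.sqrt t * ((t:ℂ) *
        (starRingEnd ℂ) (Complex.exp ((θ:ℂ) * I))))) * (g 8 - g 9) = 0 := by
      linear_combination E6 - E3
    exact sub_eq_zero.mp ((mul_eq_zero.mp h).resolve_left
      (mul_ne_zero (mul_ne_zero hrne hrne) (mul_ne_zero hrne (mul_ne_zero hTne hfne))))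
  have hT2 : ((t:ℂ) * t) ≠ 0 := mul_ne_zero hTne hTne
  have h86 : g 8 = g 6 := by
    have h : ((t:ℂ) * t) * ((g 8 - g 6) * 2) = 0 := by
      linear_combination E7 - E8
        + (g 6 + g 7 - g 4 - g 5) * ((Real.sqrt t : ℂ) * Real.sqrt t + (t:ℂ)) * hr
        + (g 4 + g 5 - g 8 - g 9) * ((t:ℂ) * t) * hef
        + ((t:ℂ) * t) * h89 - ((t:ℂ) * t) * h67
    have h2 := (mul_eq_zero.mp h).resolve_left hT2
    have h3 := (mul_eq_zero.mp h2).resolve_right two_ne_zero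
    exact sub_eq_zero.mp h3
  have h48 : g 4 = g 8 := by
    have h : ((t:ℂ) * t) * ((g 4 - g 8) * 2) = 0 := by
      linear_combination E8 - E9
        + (g 8 + g 9 - g 6 - g 7) * ((Real.sqrt t : ℂ) * Real.sqrt t + (t:ℂ)) * hr
        + (g 6 + g 7 - g 4 - g 5) * ((t:ℂ) * t) * hef
        + ((t:ℂ) * t) * h45 - ((t:ℂ) * t) * h89
    have h2 := (mul_eq_zero.mp h).resolve_left hT2
    have h3 := (mul_eq_zero.mp h2).resolve_right two_ne_zero
    exact sub_eq_zero.mp h3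
  have hu : g 4 = 0 := by
    have h : ((t:ℂ) * t) * ((2 - (starRingEnd ℂ) (Complex.exp ((θ:ℂ) * I))) * (g 4 * 2)) = 0 := by
      linear_combination E7 - E10
        + (g 4 + g 5) * ((t:ℂ) * (starRingEnd ℂ) (Complex.exp ((θ:ℂ) * I))
            - (Real.sqrt t : ℂ) * Real.sqrt t - (t:ℂ)) * hr
        - (g 8 + g 9) * ((t:ℂ) * t) * hef
        + 2 * ((t:ℂ) * t) * h48
        + ((t:ℂ) * t) * h89
        + (1 - (starRingEnd ℂ) (Complex.exp ((θ:ℂ) * I))) * ((t:ℂ) * t) * h45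
    have h2 := (mul_eq_zero.mp h).resolve_left hT2
    have h3 := (mul_eq_zero.mp h2).resolve_left hf2
    have h4 := (mul_eq_zero.mp h3).resolve_right two_ne_zero
    exact h4
  have h0 : g 0 = 0 := by
    have h5 : g 5 = 0 := h45 ▸ hu
    have : g 0 * 4 = 0 := by
      linear_combination E10
        - (g 4 + g 5) * ((t:ℂ) * (starRingEnd ℂ) (Complex.exp ((θ:ℂ) * I))) * hr
        - ((t:ℂ) * (t:ℂ) * (starRingEnd ℂ) (Complex.exp ((θ:ℂ) * I))) * (hu + h5)
        + h01 + h02 + h03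
    exact (mul_eq_zero.mp this).resolve_right (by norm_num)
  have h5 : g 5 = 0 := h45 ▸ hu
  have h8 : g 8 = 0 := h48 ▸ hu
  have h6 : g 6 = 0 := h86 ▸ h8
  have h7 : g 7 = 0 := h67 ▸ h6
  have h9 : g 9 = 0 := h89 ▸ h8
  have h1 : g 1 = 0 := h01 ▸ h0
  have h2 : g 2 = 0 := h02 ▸ h0
  have h3 : g 3 = 0 := h03 ▸ h0
  intro i
  fin_cases i
  exacts [h0, h1, h2, h3, hu, h5, h6, h7, h8, h9]
end
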